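/- Let q be a prime power and k, d positive integers, and set M = (q−1)(q^{k(d+1)}−1)/(q^k−1). Suppose c divides M and c < (q−1)(q^k − q^{−kd})/(q^k − 1). Then h_q(M/c) ≥ kd + k − c(q^k−1)/(q−1). -/

import Mathlib

open Polynomial Module

/-- The cyclic shift operator on `Fin n → F`. -/
def cycShift (F : Type*) (n : ℕ) : (Fin n → F) → (Fin n → F) :=
  fun x i => x ⟨(i.1 + 1) % n, Nat.mod_lt _ (lt_of_le_of_lt (Nat.zero_le _) i.2)⟩

/-- A subspace `U ≤ F^n` is cyclically covering if the union of its cyclic shifts is `F^n`. -/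
def IsCycCovering (F : Type*) [Field F] (n : ℕ) (U : Submodule F (Fin n → F)) : Prop :=
  ∀ x : Fin n → F, ∃ r : ℕ, (cycShift F n)^[r] x ∈ U

/-- `hq F n` : the maximum codimension of a cyclically covering subspace of `F^n`. -/
noncomputable def hq (F : Type*) [Field F] [Fintype F] (n : ℕ) : ℕ :=
  sSup {k | ∃ U : Submodule F (Fin n → F), IsCycCovering F n U ∧
    Module.finrank F (Fin n → F) - Module.finrank F U = k}

lemma nat_geom (q j : ℕ) (hq : 1 ≤ q) :
    (q - 1) * ∑ i ∈ Finset.range j, q ^ i = q ^ j - 1 := by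
  induction j with
  | zero => simp
  | succ j ih =>
    rw [Finset.sum_range_succ, Nat.mul_add, ih, pow_succ]
    have h1 : 1 ≤ q ^ j := Nat.one_le_pow _ _ hq
    have h2 : (q - 1) * q ^ j = q ^ j * q - q ^ j := by
      rw [Nat.sub_mul, one_mul, mul_comm]
    have h3 : q ^ j ≤ q ^ j * q := Nat.le_mul_of_pos_right _ hq
    omega


universe u
lemma exists_finite_ext (F : Type u) [Field F] [Fintype F] (K : ℕ) (hK : K ≠ 0) :
    ∃ (E : Type u) (_ : Field E) (_ : Algebra F E) (_ : Fintype E) (_ : FiniteDimensional F E),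
      Module.finrank F E = K := by
  classical
  have hq2 : 1 < Fintype.card F := Fintype.one_lt_card
  set q := Fintype.card F with hq
  obtain ⟨p, hcharp⟩ := CharP.exists F
  haveI : CharP F p := hcharp
  have hp : p.Prime := CharP.char_is_prime F p
  haveI : Fact p.Prime := ⟨hp⟩
  obtain ⟨m, -, hqm⟩ := FiniteField.card F p
  set gp : F[X] := X ^ q ^ K - X with hgp
  have hgpne : gp ≠ 0 := FiniteField.X_pow_card_pow_sub_X_ne_zero F hK hq2
  have hsep : gp.Separable := by
    refine galois_poly_separable p (q ^ K) ?_
    show p ∣ Fintype.card F ^ K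
    rw [hqm]
    exact dvd_pow (dvd_pow_self p m.2.ne') hK
  set E := SplittingField gp with hE
  haveI : Finite E := Module.finite_of_finite F
  haveI : Fintype E := Fintype.ofFinite E
  haveI : CharP E p := (Algebra.charP_iff F E p).mp ‹_›
  haveI : ExpChar E p := .prime hp
  set Fr := iterateFrobenius E p (m * K) with hFrdef
  have hFr : ∀ x : E, Fr x = x ^ q ^ K := fun x => by
    rw [hFrdef, iterateFrobenius_def, hq, hqm, ← pow_mul]
  have hall : ∀ x : E, x ^ q ^ K = x := by
    intro x
    have hx : x ∈ Algebra.adjoin F (gp.rootSet E) := by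
      rw [SplittingField.adjoin_rootSet]; trivial
    rw [Algebra.mem_adjoin_iff] at hx
    have hle : Subring.closure (Set.range (algebraMap F E) ∪ gp.rootSet E) ≤
        RingHom.eqLocus Fr (RingHom.id E) := by
      apply Subring.closure_le.mpr
      rintro y (⟨a, rfl⟩ | hy)
      · show Fr _ = _
        rw [hFr, ← map_pow, FiniteField.pow_card_pow, RingHom.id_apply]
      · show Fr y = RingHom.id E y
        rw [hFr, RingHom.id_apply]
        have hy' := (mem_rootSet_of_ne hgpne).mp hy
        simp only [hgp, map_sub, map_pow, aeval_X] at hy'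
        exact sub_eq_zero.mp hy'
    have := hle hx
    have h2 : Fr x = RingHom.id E x := this
    rw [hFr, RingHom.id_apply] at h2
    exact h2
  have hunc : gp.rootSet E = Set.univ := by
    apply Set.eq_univ_of_forall
    intro x
    rw [mem_rootSet_of_ne hgpne]
    simp only [hgp, map_sub, map_pow, aeval_X]
    rw [hall x, sub_self]
  have hcard : Fintype.card E = q ^ K := by
    have h1 : Fintype.card (gp.rootSet E) = gp.natDegree :=
      card_rootSet_eq_natDegree hsep (SplittingField.splits gp)
    have h2 : gp.natDegree = q ^ K := FiniteField.X_pow_card_pow_sub_X_natDegree_eq F hK hq2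
    rw [h2] at h1
    rw [← h1]
    exact Fintype.card_congr ((Equiv.setCongr hunc).trans (Equiv.Set.univ E)).symm
  have hfr : Module.finrank F E = K := by
    have hc := card_eq_pow_finrank (K := F) (V := E)
    rw [hcard] at hc
    exact Nat.pow_right_injective hq2 hc.symm
  exact ⟨E, inferInstance, inferInstance, inferInstance, inferInstance, hfr⟩

lemma aux_main (F E : Type*) [Field F] [Fintype F] [Field E] [Fintype E] [Algebra F E]
    [FiniteDimensional F E]
    (n e K : ℕ) (hn : 0 < n) (he : 0 < e)
    (hK : Module.finrank F E = K)
    (hne : n * e = Fintype.card F ^ K - 1)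
    (hbound : ∀ m : ℕ, 2 * m ≤ K → Fintype.card F ^ m - 1 < n) :
    K - e ≤ hq F n := by
  classical
  have hq2 : 1 < Fintype.card F := Fintype.one_lt_card
  haveI : NeZero n := ⟨hn.ne'⟩
  have hcardE : Fintype.card E = Fintype.card F ^ K := by
    rw [← hK]; exact card_eq_pow_finrank
  -- generator
  obtain ⟨ζ, hζ⟩ := IsCyclic.exists_generator (α := Eˣ)
  have hordζ : orderOf ζ = n * e := by
    rw [orderOf_eq_card_of_forall_mem_zpowers hζ, Nat.card_eq_fintype_card,
      Fintype.card_units, hcardE, hne]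
  set ζE : E := ((ζ : Eˣ) : E) with hζE
  have hordζE : orderOf ζE = n * e := by rw [hζE, orderOf_units, hordζ]
  have hζEne : ζE ≠ 0 := Units.ne_zero ζ
  have hζEpow1 : ζE ^ (n * e) = 1 := by rw [← hordζE]; exact pow_orderOf_eq_one ζE
  set αU : Eˣ := ζ ^ e with hαU
  set αE : E := ζE ^ e with hαE
  have hαEU : αE = ((αU : Eˣ) : E) := by rw [hαE, hαU, Units.val_pow_eq_pow_val, hζE]
  have hαEne : αE ≠ 0 := pow_ne_zero _ hζEne
  have hordαE : orderOf αE = n := by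
    rw [hαEU, orderOf_units, hαU, orderOf_pow, hordζ, Nat.gcd_eq_right ⟨n, mul_comm n e⟩,
      Nat.mul_div_cancel _ he]
  have hαn1 : αE ^ n = 1 := by rw [← hordαE]; exact pow_orderOf_eq_one αE
  -- the linear map
  set v : Fin n → E := fun i => αE ^ (i : ℕ) with hv
  set φ : (Fin n → F) →ₗ[F] E := Fintype.linearCombination F v with hφ
  have hφapp : ∀ x : Fin n → F, φ x = ∑ i, x i • v i := fun x =>
    Fintype.linearCombination_apply F v x
  -- shift formula
  have hshift : ∀ (x : Fin n → F) (i : Fin n), cycShift F n x i = x (i + 1) := by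
    intro x i
    show x _ = x _
    congr 1
    ext
    simp only [Fin.add_def, Fin.val_one']
    conv_lhs => rw [Nat.add_mod]
    rw [Nat.mod_eq_of_lt i.isLt]
  -- key shift identities
  have keyA : ∀ x : Fin n → F, αE * φ (cycShift F n x) = φ x := by
    intro x
    rw [hφapp, hφapp, Finset.mul_sum]
    rw [← Equiv.sum_comp (Equiv.addRight (1 : Fin n)) (fun j => x j • v j)]
    apply Finset.sum_congr rfl
    intro i _
    simp only [Equiv.coe_addRight, hshift, hv]
    rw [mul_smul_comm]
    congr 1
    rw [← pow_succ']
    have h1 : ((i + 1 : Fin n) : ℕ) = ((i : ℕ) + 1) % n := by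
      simp only [Fin.add_def, Fin.val_one']
      conv_rhs => rw [Nat.add_mod]
      rw [Nat.mod_eq_of_lt i.isLt]
    rw [h1, ← pow_eq_pow_mod _ hαn1]
  have keyB : ∀ (r : ℕ) (x : Fin n → F), αE ^ r * φ ((cycShift F n)^[r] x) = φ x := by
    intro r
    induction r with
    | zero => intro x; simp
    | succ r ih =>
      intro x
      rw [Function.iterate_succ_apply, pow_succ', mul_assoc, ih (cycShift F n x), keyA]
  -- surjectivity of φ
  have hrange : LinearMap.range φ = ⊤ := by
    rw [hφ, Fintype.range_linearCombination]
    have hsetv : Set.range v = Set.range (fun j : ℕ => αE ^ j) := by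
      ext y
      constructor
      · rintro ⟨i, rfl⟩; exact ⟨(i : ℕ), rfl⟩
      · rintro ⟨j, rfl⟩
        exact ⟨⟨j % n, Nat.mod_lt _ hn⟩, by simp only [hv]; exact (pow_eq_pow_mod j hαn1).symm⟩
    rw [hsetv]
    have h1 : Submodule.span F (Set.range fun j : ℕ => αE ^ j)
        = Subalgebra.toSubmodule (Algebra.adjoin F {αE}) := by
      rw [Algebra.adjoin_eq_span, ← Submonoid.powers_eq_closure, Submonoid.coe_powers]
    rw [h1]
    have hint : IsIntegral F αE := Algebra.IsIntegral.isIntegral _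
    have hIF : IntermediateField.adjoin F {αE} = ⊤ := by
      by_contra hnetop
      set L := IntermediateField.adjoin F {αE} with hL
      have hmul : finrank F L * finrank L E = K := by
        rw [finrank_mul_finrank, hK]
      have hLne : finrank F L ≠ K := by
        intro hfr
        apply hnetop
        have htop : Subalgebra.toSubmodule L.toSubalgebra = ⊤ :=
          Submodule.eq_top_of_finrank_eq (by rw [← hK] at hfr; exact hfr)
        apply IntermediateField.toSubalgebra_injective
        rw [IntermediateField.top_toSubalgebra]
        exact Subalgebra.toSubmodule_injective (by rw [htop, Algebra.top_toSubmodule])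
      have hKne : K ≠ 0 := by
        intro h0
        rw [h0] at hne
        simp only [pow_zero, Nat.sub_self] at hne
        exact (Nat.mul_pos hn he).ne' hne
      have hfrLE : finrank L E ≠ 1 := fun h1' => hLne (by rw [← hmul, h1', mul_one])
      have hfrLE0 : finrank L E ≠ 0 := fun h0 => hKne (by rw [← hmul, h0, mul_zero])
      have h2m : 2 * finrank F L ≤ K := by
        calc 2 * finrank F L ≤ finrank L E * finrank F L :=
              Nat.mul_le_mul_right _ (by omega)
          _ = K := by rw [mul_comm]; exact hmul
      -- α lies in L, a smaller field
      have hmem : αE ∈ L := IntermediateField.mem_adjoin_simple_self F αE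
      haveI : Fintype L := Fintype.ofFinite L
      set β : L := ⟨αE, hmem⟩ with hβ
      have hβne : β ≠ 0 := by
        intro h0
        apply hαEne
        have := congrArg (algebraMap L E) h0
        exact congrArg Subtype.val h0
      have hβpow : β ^ (Fintype.card L - 1) = 1 := FiniteField.pow_card_sub_one_eq_one β hβne
      have hEpow : αE ^ (Fintype.card L - 1) = 1 := by
        have := congrArg (algebraMap L E) hβpow
        simpa using this
      have hdvd : n ∣ Fintype.card L - 1 := by
        rw [← hordαE]; exact orderOf_dvd_of_pow_eq_one hEpow
      have hlt : Fintype.card L - 1 < n := by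
        have hcardL : Fintype.card L = Fintype.card F ^ finrank F L := card_eq_pow_finrank
        rw [hcardL]
        exact hbound _ h2m
      have hposL : 0 < Fintype.card L - 1 := by
        have : 1 < Fintype.card L := Fintype.one_lt_card
        omega
      exact absurd (Nat.le_of_dvd hposL hdvd) (not_le.mpr hlt)
    have hadj : Algebra.adjoin F {αE} = ⊤ := by
      rw [← IntermediateField.adjoin_simple_toSubalgebra_of_isAlgebraic hint.isAlgebraic, hIF,
        IntermediateField.top_toSubalgebra]
    rw [hadj, Algebra.top_toSubmodule]
  -- the subspace
  set Wgen : Finset E := Finset.image (fun s : ℕ => ζE ^ s) (Finset.range e) with hWgen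
  set W : Submodule F E := Submodule.span F (Wgen : Set E) with hW
  have hWrank : finrank F W ≤ e := by
    refine le_trans (finrank_span_finset_le_card Wgen) ?_
    refine le_trans Finset.card_image_le ?_
    simp
  set U : Submodule F (Fin n → F) := W.comap φ with hU
  -- covering
  have hcov : IsCycCovering F n U := by
    intro x
    by_cases h0 : φ x = 0
    · refine ⟨0, ?_⟩
      simp only [Function.iterate_zero, id_eq, hU, Submodule.mem_comap, h0]
      exact W.zero_mem
    · have hunit : IsUnit (φ x) := Ne.isUnit h0
      obtain ⟨t, ht⟩ := (mem_powers_iff_mem_zpowers).mpr (hζ hunit.unit)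
      have htE : ζE ^ t = φ x := by
        have := congrArg (Units.val) ht
        rw [Units.val_pow_eq_pow_val] at this
        rw [hζE, this, IsUnit.unit_spec]
      set t' := t % (n * e) with ht'
      have hφx : ζE ^ t' = φ x := by rw [ht', ← pow_eq_pow_mod t hζEpow1, htE]
      refine ⟨t' / e, ?_⟩
      have hcalc : αE ^ (t' / e) * ζE ^ (t' % e) = φ x := by
        rw [hαE, ← pow_mul, ← pow_add, Nat.div_add_mod t' e, hφx]
      have hc : φ ((cycShift F n)^[t' / e] x) = ζE ^ (t' % e) := by
        apply mul_left_cancel₀ (pow_ne_zero (t' / e) hαEne)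
        rw [keyB, hcalc]
      simp only [hU, Submodule.mem_comap, hc]
      apply Submodule.subset_span
      refine Finset.mem_coe.mpr (Finset.mem_image.mpr ⟨t' % e, Finset.mem_range.mpr ?_, rfl⟩)
      exact Nat.mod_lt _ he
  -- dimension count
  have hkerle : LinearMap.ker φ ≤ U := by
    intro y hy
    simp only [hU, Submodule.mem_comap, LinearMap.mem_ker.mp hy]
    exact W.zero_mem
  set ψ : U →ₗ[F] E := φ.domRestrict U with hψ
  have hrangeψ : LinearMap.range ψ = W := by
    rw [hψ, LinearMap.range_domRestrict, hU, Submodule.map_comap_eq, hrange, top_inf_eq]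
  have hkerψ : finrank F (LinearMap.ker ψ) = finrank F (LinearMap.ker φ) := by
    rw [hψ, LinearMap.ker_domRestrict]
    exact LinearEquiv.finrank_eq (Submodule.comapSubtypeEquivOfLe hkerle)
  have h1 : finrank F W + finrank F (LinearMap.ker φ) = finrank F U := by
    rw [← hrangeψ, ← hkerψ]
    exact LinearMap.finrank_range_add_finrank_ker ψ
  have h2 : K + finrank F (LinearMap.ker φ) = n := by
    have h3 := LinearMap.finrank_range_add_finrank_ker φ
    rw [hrange, finrank_top, hK, finrank_pi, Fintype.card_fin] at h3
    exact h3
  have hWK : finrank F W ≤ K := by rw [← hK]; exact Submodule.finrank_le W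
  have hfinpi : finrank F (Fin n → F) = n := by rw [finrank_pi, Fintype.card_fin]
  have hm0 : finrank F (Fin n → F) - finrank F U = K - finrank F W := by omega
  -- conclude
  have hbdd : BddAbove {m | ∃ U : Submodule F (Fin n → F), IsCycCovering F n U ∧
      finrank F (Fin n → F) - finrank F U = m} := by
    refine ⟨finrank F (Fin n → F), ?_⟩
    rintro m ⟨U', -, hU'⟩
    exact hU' ▸ Nat.sub_le _ _
  have hmem : (K - finrank F W) ∈ {m | ∃ U : Submodule F (Fin n → F), IsCycCovering F n U ∧
      finrank F (Fin n → F) - finrank F U = m} := ⟨U, hcov, hm0⟩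
  calc K - e ≤ K - finrank F W := Nat.sub_le_sub_left hWrank K
    _ ≤ hq F n := le_csSup hbdd hmem

/-- Theorem 4 (general lower bound): with M = (q−1)(q^{k(d+1)}−1)/(q^k−1) and c ∣ M,
c < (q−1)(q^k − q^{−kd})/(q^k−1), we have h_q(M/c) ≥ kd + k − c(q^k−1)/(q−1). -/
theorem stmt_8 (F : Type*) [Field F] [Fintype F] (k d c M : ℕ) (hk : 0 < k) (hd : 0 < d)
    (hM : M = (Fintype.card F - 1) * ∑ r ∈ Finset.range (d + 1), Fintype.card F ^ (k * r))
    (hc : c ∣ M)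
    (hcsmall : (c : ℚ) < ((Fintype.card F : ℚ) - 1) *
      ((Fintype.card F : ℚ) ^ k - (Fintype.card F : ℚ) ^ (-(k * d : ℤ))) /
      ((Fintype.card F : ℚ) ^ k - 1)) :
    k * d + k - c * ∑ t ∈ Finset.range k, Fintype.card F ^ t ≤ hq F (M / c) := by
  set q := Fintype.card F with hqdef
  have hq2 : 2 ≤ q := Fintype.one_lt_card
  set S := ∑ t ∈ Finset.range k, q ^ t with hS
  set T := ∑ r ∈ Finset.range (d + 1), q ^ (k * r) with hT
  set K := k * (d + 1) with hKdef
  set e := c * S with he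
  set n := M / c with hn
  have hSk : (q - 1) * S = q ^ k - 1 := nat_geom q k (by omega)
  have hTk : (q ^ k - 1) * T = q ^ K - 1 := by
    have : T = ∑ r ∈ Finset.range (d + 1), (q ^ k) ^ r := by
      rw [hT]; exact Finset.sum_congr rfl fun r _ => (pow_mul q k r)
    rw [this, nat_geom (q ^ k) (d + 1) (Nat.one_le_pow _ _ (by omega)), ← pow_mul]
  have hSpos : 0 < S := by
    rw [hS]
    exact Finset.sum_pos (fun t _ => pow_pos (by omega) _)
      (Finset.nonempty_range_iff.mpr hk.ne')
  have hTpos : 0 < T := by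
    rw [hT]
    exact Finset.sum_pos (fun t _ => pow_pos (by omega) _)
      (Finset.nonempty_range_iff.mpr (Nat.succ_ne_zero d))
  have hMpos : 0 < M := by
    rw [hM]
    exact Nat.mul_pos (by omega) hTpos
  have hcpos : 0 < c := by
    rcases Nat.eq_zero_or_pos c with h | h
    · exfalso; rw [h] at hc; exact hMpos.ne' (Nat.eq_zero_of_zero_dvd hc)
    · exact h
  have hcn : c * n = M := Nat.mul_div_cancel' hc
  have hne : n * e = q ^ K - 1 := by
    calc n * e = c * n * S := by rw [he]; ring
      _ = M * S := by rw [hcn]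
      _ = (q - 1) * T * S := by rw [hM]
      _ = ((q - 1) * S) * T := by ring
      _ = (q ^ k - 1) * T := by rw [hSk]
      _ = q ^ K - 1 := hTk
  have hepos : 0 < e := Nat.mul_pos hcpos hSpos
  have hKpos : 0 < K := Nat.mul_pos hk (by omega)
  have hqKpos : 1 < q ^ K := Nat.one_lt_pow hKpos.ne' hq2
  have hnpos : 0 < n := by
    rcases Nat.eq_zero_or_pos n with h | h
    · exfalso; rw [h, zero_mul] at hne; omega
    · exact h
  -- rational bound: e ≤ q^k - 1
  have hqk2 : 2 ≤ q ^ k := le_trans hq2 (Nat.le_self_pow hk.ne' q)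
  have hek : e ≤ q ^ k - 1 := by
    have hq1Q : (1 : ℚ) < (q : ℚ) := by exact_mod_cast hq2
    have hA1 : (0 : ℚ) < (q : ℚ) ^ k - 1 := by
      have : (1 : ℚ) < (q : ℚ) ^ k := one_lt_pow₀ hq1Q hk.ne'
      linarith
    have hq1Q' : (0 : ℚ) < (q : ℚ) - 1 := by linarith
    have hB : (0 : ℚ) < (q : ℚ) ^ (-(k * d : ℤ)) := zpow_pos (by linarith) _
    have hmul := (lt_div_iff₀ hA1).mp hcsmall
    -- c * (q^k - 1) < (q-1) * (q^k - q^{-kd}) < (q-1) * q^k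
    have h2 : (c : ℚ) * ((q : ℚ) ^ k - 1) < ((q : ℚ) - 1) * (q : ℚ) ^ k := by
      nlinarith
    -- (e:ℚ) * (q-1) = c * (q^k-1)
    have hcast : ((q : ℚ) - 1) * (S : ℚ) = (q : ℚ) ^ k - 1 := by
      have := hSk
      have h3 : ((q - 1 : ℕ) : ℚ) * ((S : ℕ) : ℚ) = (((q ^ k - 1 : ℕ) : ℕ) : ℚ) := by
        exact_mod_cast congrArg (Nat.cast : ℕ → ℚ) this
      rwa [Nat.cast_sub (by omega), Nat.cast_sub (by omega), Nat.cast_pow, Nat.cast_one] at h3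
    have heq : (e : ℚ) * ((q : ℚ) - 1) = (c : ℚ) * ((q : ℚ) ^ k - 1) := by
      rw [he, Nat.cast_mul, ← hcast]; ring
    have hlt : (e : ℚ) * ((q : ℚ) - 1) < ((q : ℚ) - 1) * (q : ℚ) ^ k := by
      rw [heq]; exact h2
    have heqk : (e : ℚ) < (q : ℚ) ^ k := by
      by_contra hcon
      push_neg at hcon
      nlinarith
    have : e < q ^ k := by exact_mod_cast heqk
    omega
  -- bound on n
  have hnbig : q ^ (k * d) ≤ n := by
    have h1 : q ^ (k * d) * e ≤ q ^ (k * d) * (q ^ k - 1) := Nat.mul_le_mul_left _ hek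
    have h2 : q ^ (k * d) * (q ^ k - 1) = q ^ K - q ^ (k * d) := by
      rw [Nat.mul_sub, mul_one, ← pow_add, show k * d + k = K from by rw [hKdef]; ring]
    have h3 : 1 ≤ q ^ (k * d) := Nat.one_le_pow _ _ (by omega)
    have h4 : q ^ (k * d) * e ≤ n * e := by
      rw [hne]; omega
    exact Nat.le_of_mul_le_mul_right h4 hepos
  have hbound : ∀ m : ℕ, 2 * m ≤ K → q ^ m - 1 < n := by
    intro m hm
    have hmkd : m ≤ k * d := by
      have : K = k * d + k := by rw [hKdef]; ring
      have hkkd : k ≤ k * d := Nat.le_mul_of_pos_right k hd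
      omega
    have h5 : q ^ m ≤ q ^ (k * d) := Nat.pow_le_pow_right (by omega) hmkd
    have h6 : 1 ≤ q ^ m := Nat.one_le_pow _ _ (by omega)
    omega
  -- build the extension and conclude
  obtain ⟨E, hfE, haE, hftE, hfdE, hfrE⟩ := exists_finite_ext F K hKpos.ne'
  letI := hfE; letI := haE; letI := hftE; letI := hfdE
  have hmain := aux_main F E n e K hnpos hepos hfrE hne hbound
  have hKeq : k * d + k = K := by rw [hKdef]; ring
  rw [hKeq]
  exact hmain
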